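/- A pointer list of length 2 that is a fixed point of cde, cdr, and cds must equal [μ, λ] or [-λ, -μ], where μ is its minimum absolute value and λ its maximum absolute value. -/
import Mathlib


/-- A finite sequence of integers (0-indexed list) is a *pointer list*:
(1) even positive length; (2) unique index of minimum absolute value;
(3) unique index of maximum absolute value; (4) each intermediate absolute
value occurs at exactly one other index; (5) for each even (0-based) index i,
x i ≤ x (i+1) and x i * x (i+1) > 0; (6) for each even (0-based) index i no
entry has absolute value strictly between |x i| and |x (i+1)|. -/
def IsPointerList (P : List ℤ) : Prop :=
  P.length % 2 = 0 ∧ 0 < P.length ∧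
  (∃! i, i < P.length ∧ ∀ j < P.length, |P.getD i 0| ≤ |P.getD j 0|) ∧
  (∃! i, i < P.length ∧ ∀ j < P.length, |P.getD j 0| ≤ |P.getD i 0|) ∧
  (∀ i < P.length, (∃ j < P.length, |P.getD j 0| < |P.getD i 0|) →
      (∃ j < P.length, |P.getD i 0| < |P.getD j 0|) →
      ∃! j, j < P.length ∧ j ≠ i ∧ |P.getD j 0| = |P.getD i 0|) ∧
  (∀ i, i % 2 = 0 → i + 1 < P.length →
      P.getD i 0 ≤ P.getD (i+1) 0 ∧ 0 < P.getD i 0 * P.getD (i+1) 0) ∧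
  (∀ i, i % 2 = 0 → i + 1 < P.length →
      ¬ ∃ j < P.length,
        (|P.getD i 0| < |P.getD j 0| ∧ |P.getD j 0| < |P.getD (i+1) 0|) ∨
        (|P.getD (i+1) 0| < |P.getD j 0| ∧ |P.getD j 0| < |P.getD i 0|))

-- Context directed excision: delete the first adjacent equal pair, if any.
open Classical in
noncomputable def cde (P : List ℤ) : List ℤ :=
  if h : ∃ i, i + 1 < P.length ∧ P.getD i 0 = P.getD (i+1) 0 then
    P.take (Nat.find h) ++ P.drop (Nat.find h + 2)
  else P

-- Context directed reversal: for the minimal i admitting j > i with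
-- x i = -(x j) (and the minimal such j), reverse and negate the segment
-- from position i+1 through j.
open Classical in
noncomputable def cdr (P : List ℤ) : List ℤ :=
  if h : ∃ i, ∃ j, i < j ∧ j < P.length ∧ P.getD i 0 = -(P.getD j 0) then
    let i := Nat.find h
    let j := Nat.find (Nat.find_spec h)
    P.take (i+1) ++ (((P.drop (i+1)).take (j - i)).reverse.map (fun z => -z)) ++
      P.drop (j+1)
  else P

-- Context directed block swap: for the lexicographically least (i, j)
-- admitting k, ℓ with i < j < k < ℓ, x i = x k, x j = x ℓ, interchange
-- the blocks x_{i+1}..x_{j-1} and x_k..x_ℓ.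
open Classical in
noncomputable def cds (P : List ℤ) : List ℤ :=
  if h : ∃ i, ∃ j, ∃ k, ∃ l, i < j ∧ j < k ∧ k < l ∧ l < P.length ∧
      P.getD i 0 = P.getD k 0 ∧ P.getD j 0 = P.getD l 0 then
    let i := Nat.find h
    let j := Nat.find (Nat.find_spec h)
    let k := Nat.find (Nat.find_spec (Nat.find_spec h))
    let l := Nat.find (Nat.find_spec (Nat.find_spec (Nat.find_spec h)))
    P.take (i+1) ++ ((P.drop k).take (l - k + 1)) ++ ((P.drop j).take (k - j)) ++
      ((P.drop (i+1)).take (j - i - 1)) ++ P.drop (l+1)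
  else P

/-- The doubling map π: each entry z is replaced by (z, z+1) if z > 0
and by (z-1, z) if z < 0. -/
def piMap (M : List ℤ) : List ℤ :=
  M.flatMap (fun z => if 0 < z then [z, z + 1] else [z - 1, z])

/-- One step of the HNS algorithm: apply cde if applicable, else cds if
applicable, else cdr. -/
noncomputable def hnsStep (P : List ℤ) : List ℤ :=
  if cde P ≠ P then cde P else if cds P ≠ P then cds P else cdr P

/-- a length-2 pointer list fixed by cde, cdr and cds equals
[μ, λ] or [-λ, -μ]. -/
theorem stmt12 (P : List ℤ) (hP : IsPointerList P) (hlen : P.length = 2)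
    (h1 : cde P = P) (h2 : cdr P = P) (h3 : cds P = P)
    (mu lam : ℤ)
    (hmu : (∃ i < P.length, |P.getD i 0| = mu) ∧
      ∀ i < P.length, mu ≤ |P.getD i 0|)
    (hlam : (∃ i < P.length, |P.getD i 0| = lam) ∧
      ∀ i < P.length, |P.getD i 0| ≤ lam) :
    P = [mu, lam] ∨ P = [-lam, -mu] := by
  obtain ⟨a, b, rfl⟩ := List.length_eq_two.mp hlen
  obtain ⟨-, -, -, hmax, -, h5, -⟩ := hP
  have hab : a ≤ b ∧ 0 < a * b := by
    have := h5 0 rfl (by simp)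
    simpa using this
  have hne : |a| ≠ |b| := by
    intro h
    obtain ⟨i, hi, hiu⟩ := hmax
    have h0 : (0:ℕ) = i := hiu 0 ⟨by simp, by
      intro j hj
      simp only [List.length_cons, List.length_nil] at hj
      interval_cases j <;> simp [h]⟩
    have h1' : (1:ℕ) = i := hiu 1 ⟨by simp, by
      intro j hj
      simp only [List.length_cons, List.length_nil] at hj
      interval_cases j <;> simp [h]⟩
    omega
  obtain ⟨⟨i0, hi0, hmueq⟩, hmule⟩ := hmu
  obtain ⟨⟨i1, hi1, hlameq⟩, hlamle⟩ := hlam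
  simp only [List.length_cons, List.length_nil] at hi0 hi1
  have hmua : mu ≤ |a| := by simpa using hmule 0 (by simp)
  have hmub : mu ≤ |b| := by simpa using hmule 1 (by simp)
  have hlama : |a| ≤ lam := by simpa using hlamle 0 (by simp)
  have hlamb : |b| ≤ lam := by simpa using hlamle 1 (by simp)
  have hmuv : mu = |a| ∨ mu = |b| := by
    interval_cases i0 <;> simp_all
  have hlamv : lam = |a| ∨ lam = |b| := by
    interval_cases i1 <;> simp_all
  simp only [List.cons.injEq, and_true]
  obtain ⟨hle, hpos⟩ := hab
  rcases lt_trichotomy a 0 with ha | ha | ha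
  · have hb : b < 0 := by nlinarith
    rcases abs_cases a with ⟨e1, e2⟩ | ⟨e1, e2⟩ <;>
      rcases abs_cases b with ⟨f1, f2⟩ | ⟨f1, f2⟩ <;> omega
  · simp [ha] at hpos
  · have hb : 0 < b := by nlinarith
    rcases abs_cases a with ⟨e1, e2⟩ | ⟨e1, e2⟩ <;>
      rcases abs_cases b with ⟨f1, f2⟩ | ⟨f1, f2⟩ <;> omega
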